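/- Let a = x₀ < x₁ < ⋯ < xₙ = b be a partition of [a,b], hᵢ = x_{i+1} - xᵢ, and ξᵢ ∈ [xᵢ, (xᵢ+x_{i+1})/2] for each i. Let f have absolutely continuous derivative with f'' ∈ L^∞([a,b]). Define S(f,Iₙ,ξ) = (1/4)∑ᵢ [f(xᵢ)+f(ξᵢ)+f(xᵢ+x_{i+1}-ξᵢ)+f(x_{i+1})]hᵢ - (1/4)∑ᵢ hᵢ(ξᵢ - (xᵢ+x_{i+1})/2)[f'(ξᵢ) - f'(xᵢ+x_{i+1}-ξᵢ)]. Then |∫_a^b f(x) dx - S(f,Iₙ,ξ)| ≤ (1/3)‖f''‖_∞ ∑ᵢ [((xᵢ+3x_{i+1})/4 - ξᵢ)(xᵢ-ξᵢ)² + ((xᵢ+x_{i+1})/2 - ξᵢ)³]. -/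

import Mathlib

open MeasureTheory Set

private lemma cq_parts (p q α β : ℝ) (f f' f'' : ℝ → ℝ)
    (hf : ∀ t ∈ uIcc p q, HasDerivAt f (f' t) t)
    (hf' : ∀ t ∈ uIcc p q, HasDerivAt f' (f'' t) t)
    (hint : IntervalIntegrable f'' volume p q) :
    (∫ t in p..q, (1/2*(t-α)*(t-β)) * f'' t)
      = 1/2*(q-α)*(q-β)*f' q - 1/2*(p-α)*(p-β)*f' p
        - ((q-(α+β)/2)*f q - (p-(α+β)/2)*f p) + ∫ t in p..q, f t := by
  have hk : ∀ t ∈ uIcc p q, HasDerivAt (fun s => 1/2*(s-α)*(s-β)) (t-(α+β)/2) t := by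
    intro t _
    have h := (((hasDerivAt_id t).sub_const α).mul ((hasDerivAt_id t).sub_const β)).const_mul (1/2:ℝ)
    convert! h using 1
    · funext s; simp only [id_eq, Pi.mul_apply]; ring
    · simp only [id_eq]; ring
  have hk' : ∀ t ∈ uIcc p q, HasDerivAt (fun s => s-(α+β)/2) (1:ℝ) t := by
    intro t _
    simpa using (hasDerivAt_id t).sub_const ((α+β)/2)
  have hc1 : ContinuousOn f' (uIcc p q) := fun t ht => (hf' t ht).continuousAt.continuousWithinAt
  have hc2 : ContinuousOn f (uIcc p q) := fun t ht => (hf t ht).continuousAt.continuousWithinAt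
  have hf'cont : IntervalIntegrable f' volume p q := hc1.intervalIntegrable
  have hfcont : IntervalIntegrable f volume p q := hc2.intervalIntegrable
  have hk'int : IntervalIntegrable (fun t => t-(α+β)/2) volume p q :=
    (continuous_id.sub continuous_const).intervalIntegrable p q
  have e1 := intervalIntegral.integral_mul_deriv_eq_deriv_mul hk hf' hk'int hint
  have e2 := intervalIntegral.integral_mul_deriv_eq_deriv_mul hk' hf
    (intervalIntegrable_const (c := (1:ℝ))) hf'cont
  rw [e1, e2]
  simp only [one_mul]
  ring

private lemma cq_poly (p q α β : ℝ) :
    (∫ t in p..q, 1/2*(t-α)*(t-β))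
      = (q^3/6 - (α+β)*q^2/4 + α*β*q/2) - (p^3/6 - (α+β)*p^2/4 + α*β*p/2) := by
  have hder : ∀ t ∈ uIcc p q,
      HasDerivAt (fun s => s^3/6 - (α+β)*s^2/4 + α*β*s/2) (1/2*(t-α)*(t-β)) t := by
    intro t _
    have h := (((hasDerivAt_pow 3 t).div_const 6).sub
      (((hasDerivAt_pow 2 t).const_mul (α+β)).div_const 4)).add
      ((hasDerivAt_id t).const_mul (α*β) |>.div_const 2)
    convert! h using 1
    push_cast
    ring
  rw [intervalIntegral.integral_eq_sub_of_hasDerivAt hder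
    (Continuous.intervalIntegrable (by continuity) p q)]

private lemma cq_bd_neg (p q M : ℝ) (hpq : p ≤ q) (hM0 : 0 ≤ M) (k g : ℝ → ℝ)
    (hk : Continuous k) (hg : IntervalIntegrable g volume p q)
    (hbd : ∀ᵐ t ∂volume, t ∈ Ioc p q → |g t| ≤ M)
    (hsign : ∀ t ∈ Icc p q, k t ≤ 0) :
    |∫ t in p..q, k t * g t| ≤ M * -(∫ t in p..q, k t) := by
  have h0 : ∀ᵐ t ∂(volume.restrict (Set.uIoc p q)), ‖k t * g t‖ ≤ M * -(k t) := by
    rw [uIoc_of_le hpq]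
    filter_upwards [ae_restrict_of_ae hbd, ae_restrict_mem measurableSet_Ioc] with t h1 h2
    have hkt : k t ≤ 0 := hsign t (Ioc_subset_Icc_self h2)
    calc ‖k t * g t‖ = |k t| * |g t| := abs_mul _ _
      _ ≤ |k t| * M := mul_le_mul_of_nonneg_left (h1 h2) (abs_nonneg _)
      _ = M * -(k t) := by rw [abs_of_nonpos hkt]; ring
  have h1 := intervalIntegral.norm_integral_le_abs_of_norm_le h0
    (((continuous_const.mul hk.neg)).intervalIntegrable p q)
  have h2 : (∫ t in p..q, M * -(k t)) = M * -(∫ t in p..q, k t) := by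
    rw [intervalIntegral.integral_const_mul, intervalIntegral.integral_neg]
  have h3 : (0:ℝ) ≤ M * -(∫ t in p..q, k t) := by
    have h4 : (0:ℝ) ≤ ∫ t in p..q, -(k t) := intervalIntegral.integral_nonneg hpq
      (fun t ht => neg_nonneg.mpr (hsign t ht))
    rw [intervalIntegral.integral_neg] at h4
    nlinarith
  calc |∫ t in p..q, k t * g t| ≤ |∫ t in p..q, M * -(k t)| := h1
    _ = M * -(∫ t in p..q, k t) := by rw [h2, abs_of_nonneg h3]

private lemma cq_bd_pos (p q M : ℝ) (hpq : p ≤ q) (hM0 : 0 ≤ M) (k g : ℝ → ℝ)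
    (hk : Continuous k) (hg : IntervalIntegrable g volume p q)
    (hbd : ∀ᵐ t ∂volume, t ∈ Ioc p q → |g t| ≤ M)
    (hsign : ∀ t ∈ Icc p q, 0 ≤ k t) :
    |∫ t in p..q, k t * g t| ≤ M * (∫ t in p..q, k t) := by
  have h := cq_bd_neg p q M hpq hM0 (fun t => -(k t)) g hk.neg hg hbd
    (fun t ht => neg_nonpos.mpr (hsign t ht))
  simp only [neg_mul, intervalIntegral.integral_neg, neg_neg, abs_neg] at h
  exact h

set_option maxHeartbeats 1000000 in
private lemma cq_single (u v ξ M : ℝ) (huv : u ≤ v) (hM0 : 0 ≤ M)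
    (hξ1 : u ≤ ξ) (hξ2 : ξ ≤ (u+v)/2)
    (f f' f'' : ℝ → ℝ)
    (hf : ∀ t ∈ Icc u v, HasDerivAt f (f' t) t)
    (hf' : ∀ t ∈ Icc u v, HasDerivAt f' (f'' t) t)
    (hint : IntervalIntegrable f'' volume u v)
    (hbd : ∀ᵐ t ∂volume, t ∈ Icc u v → |f'' t| ≤ M) :
    |(∫ t in u..v, f t)
       - ((1/4)*(f u + f ξ + f (u+v-ξ) + f v)*(v-u)
          - (1/4)*(v-u)*(ξ-(u+v)/2)*(f' ξ - f' (u+v-ξ)))|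
    ≤ (1/3)*M*(((u+3*v)/4 - ξ)*(u-ξ)^2 + ((u+v)/2-ξ)^3) := by
  have h1 : ξ ≤ u+v-ξ := by linarith
  have h2 : u+v-ξ ≤ v := by linarith
  have hs1 : uIcc u ξ ⊆ Icc u v := by
    rw [uIcc_of_le hξ1]; exact Icc_subset_Icc le_rfl (by linarith)
  have hs2 : uIcc ξ (u+v-ξ) ⊆ Icc u v := by
    rw [uIcc_of_le h1]; exact Icc_subset_Icc hξ1 h2
  have hs3 : uIcc (u+v-ξ) v ⊆ Icc u v := by
    rw [uIcc_of_le h2]; exact Icc_subset_Icc (by linarith) le_rfl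
  have huIcc : uIcc u v = Icc u v := uIcc_of_le huv
  have hm1 : IntervalIntegrable f'' volume u ξ := hint.mono_set (huIcc ▸ hs1)
  have hm2 : IntervalIntegrable f'' volume ξ (u+v-ξ) := hint.mono_set (huIcc ▸ hs2)
  have hm3 : IntervalIntegrable f'' volume (u+v-ξ) v := hint.mono_set (huIcc ▸ hs3)
  have e1 := cq_parts u ξ u ((u+v)/2) f f' f''
    (fun t ht => hf t (hs1 ht)) (fun t ht => hf' t (hs1 ht)) hm1
  have e2 := cq_parts ξ (u+v-ξ) ((u+v)/2) ((u+v)/2) f f' f''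
    (fun t ht => hf t (hs2 ht)) (fun t ht => hf' t (hs2 ht)) hm2
  have e3 := cq_parts (u+v-ξ) v v ((u+v)/2) f f' f''
    (fun t ht => hf t (hs3 ht)) (fun t ht => hf' t (hs3 ht)) hm3
  have hfc : ContinuousOn f (Icc u v) := fun t ht => (hf t ht).continuousAt.continuousWithinAt
  have i1 : IntervalIntegrable f volume u ξ := (hfc.mono hs1).intervalIntegrable
  have i2 : IntervalIntegrable f volume ξ (u+v-ξ) := (hfc.mono hs2).intervalIntegrable
  have i3 : IntervalIntegrable f volume (u+v-ξ) v := (hfc.mono hs3).intervalIntegrable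
  have hsplit : (∫ t in u..ξ, f t) + (∫ t in ξ..(u+v-ξ), f t) + (∫ t in (u+v-ξ)..v, f t)
      = ∫ t in u..v, f t := by
    rw [intervalIntegral.integral_add_adjacent_intervals i1 i2,
        intervalIntegral.integral_add_adjacent_intervals (i1.trans i2) i3]
  -- bounds
  have hbd1 : ∀ᵐ t ∂volume, t ∈ Ioc u ξ → |f'' t| ≤ M := by
    filter_upwards [hbd] with t h ht
    exact h ⟨ht.1.le, by linarith [ht.2]⟩
  have hbd2 : ∀ᵐ t ∂volume, t ∈ Ioc ξ (u+v-ξ) → |f'' t| ≤ M := by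
    filter_upwards [hbd] with t h ht
    exact h ⟨by linarith [ht.1], by linarith [ht.2]⟩
  have hbd3 : ∀ᵐ t ∂volume, t ∈ Ioc (u+v-ξ) v → |f'' t| ≤ M := by
    filter_upwards [hbd] with t h ht
    exact h ⟨by linarith [ht.1], ht.2⟩
  have b1 := cq_bd_neg u ξ M hξ1 hM0 (fun t => 1/2*(t-u)*(t-(u+v)/2)) f''
    (by fun_prop) hm1 hbd1
    (fun t ht => by nlinarith [ht.1, ht.2])
  have b2 := cq_bd_pos ξ (u+v-ξ) M h1 hM0 (fun t => 1/2*(t-(u+v)/2)*(t-(u+v)/2)) f''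
    (by fun_prop) hm2 hbd2
    (fun t ht => by show (0:ℝ) ≤ 1/2*(t-(u+v)/2)*(t-(u+v)/2); nlinarith [sq_nonneg (t-(u+v)/2)])
  have b3 := cq_bd_neg (u+v-ξ) v M h2 hM0 (fun t => 1/2*(t-v)*(t-(u+v)/2)) f''
    (by fun_prop) hm3 hbd3
    (fun t ht => by nlinarith [ht.1, ht.2])
  rw [cq_poly u ξ u ((u+v)/2)] at b1
  rw [cq_poly ξ (u+v-ξ) ((u+v)/2) ((u+v)/2)] at b2
  rw [cq_poly (u+v-ξ) v v ((u+v)/2)] at b3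
  have key : (∫ t in u..v, f t)
       - ((1/4)*(f u + f ξ + f (u+v-ξ) + f v)*(v-u)
          - (1/4)*(v-u)*(ξ-(u+v)/2)*(f' ξ - f' (u+v-ξ)))
      = (∫ t in u..ξ, (1/2*(t-u)*(t-(u+v)/2)) * f'' t)
        + (∫ t in ξ..(u+v-ξ), (1/2*(t-(u+v)/2)*(t-(u+v)/2)) * f'' t)
        + (∫ t in (u+v-ξ)..v, (1/2*(t-v)*(t-(u+v)/2)) * f'' t) := by
    rw [← hsplit]
    linear_combination -e1 - e2 - e3
  rw [key]
  refine le_trans ((abs_add_le _ _).trans (add_le_add (abs_add_le _ _) le_rfl)) ?_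
  refine le_trans (add_le_add (add_le_add b1 b2) b3) (le_of_eq ?_)
  ring

theorem composite_quadrature
    (a b : ℝ) (hab : a < b) (n : ℕ) (x : ℕ → ℝ) (ξ : ℕ → ℝ)
    (hx0 : x 0 = a) (hxn : x n = b)
    (hmono : ∀ i < n, x i < x (i + 1))
    (hξ : ∀ i < n, ξ i ∈ Icc (x i) ((x i + x (i + 1)) / 2))
    (f f' f'' : ℝ → ℝ) (M : ℝ)
    (hf' : ∀ t ∈ Icc a b, HasDerivAt f (f' t) t)
    (hf'' : ∀ t ∈ Icc a b, HasDerivAt f' (f'' t) t)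
    (hint : IntervalIntegrable f'' volume a b)
    (hM : ∀ᵐ t ∂volume, t ∈ Icc a b → |f'' t| ≤ M) :
    |(∫ t in a..b, f t)
      - ((1/4) * ∑ i ∈ Finset.range n,
           (f (x i) + f (ξ i) + f (x i + x (i + 1) - ξ i) + f (x (i + 1)))
             * (x (i + 1) - x i)
         - (1/4) * ∑ i ∈ Finset.range n,
             (x (i + 1) - x i) * (ξ i - (x i + x (i + 1)) / 2)
               * (f' (ξ i) - f' (x i + x (i + 1) - ξ i)))|
    ≤ (1/3) * M * ∑ i ∈ Finset.range n,
        (((x i + 3 * x (i + 1)) / 4 - ξ i) * (x i - ξ i)^2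
          + ((x i + x (i + 1)) / 2 - ξ i)^3) := by
  -- 0 ≤ M
  have hM0 : 0 ≤ M := by
    have hres : ∀ᵐ t ∂(volume.restrict (Icc a b)), |f'' t| ≤ M := by
      filter_upwards [ae_restrict_of_ae hM, ae_restrict_mem measurableSet_Icc] with t h1 h2
      exact h1 h2
    have hne : (volume.restrict (Icc a b)) ≠ 0 := by
      intro h
      have h2 : volume (Icc a b) = 0 := by
        rw [← Measure.restrict_apply_univ, h]; simp
      rw [Real.volume_Icc] at h2
      simp only [ENNReal.ofReal_eq_zero] at h2
      linarith
    have : (ae (volume.restrict (Icc a b))).NeBot := MeasureTheory.ae_neBot.mpr hne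
    obtain ⟨t, ht⟩ := hres.exists
    exact (abs_nonneg _).trans ht
  -- monotonicity of the partition
  have hle : ∀ i j : ℕ, i ≤ j → j ≤ n → x i ≤ x j := by
    intro i j hij hjn
    induction j with
    | zero => have : i = 0 := Nat.le_zero.mp hij; rw [this]
    | succ k ih =>
      rcases Nat.lt_or_ge i (k+1) with h | h
      · exact (ih (Nat.lt_succ_iff.mp h) (by omega)).trans (hmono k (by omega)).le
      · have : i = k+1 := le_antisymm hij h
        rw [this]
  have hsub : ∀ i < n, Icc (x i) (x (i+1)) ⊆ Icc a b := by
    intro i hi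
    exact Icc_subset_Icc (hx0 ▸ hle 0 i (Nat.zero_le _) hi.le)
      (hxn ▸ hle (i+1) n hi (le_refl n))
  have hstep : ∀ i < n, x i ≤ x (i+1) := fun i hi => (hmono i hi).le
  have huv : ∀ i < n, uIcc (x i) (x (i+1)) ⊆ uIcc a b := by
    intro i hi
    rw [uIcc_of_le (hstep i hi), uIcc_of_le hab.le]
    exact hsub i hi
  have hfc : ContinuousOn f (Icc a b) := fun t ht => (hf' t ht).continuousAt.continuousWithinAt
  have hfi : ∀ k < n, IntervalIntegrable f volume (x k) (x (k+1)) := by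
    intro k hk
    exact (hfc.mono ((uIcc_of_le hab.le) ▸ huv k hk)).intervalIntegrable
  have hsum : ∑ i ∈ Finset.range n, ∫ t in (x i)..(x (i+1)), f t = ∫ t in a..b, f t := by
    rw [intervalIntegral.sum_integral_adjacent_intervals hfi, hx0, hxn]
  have main : ∀ i ∈ Finset.range n,
      |(∫ t in (x i)..(x (i+1)), f t)
        - ((1/4) * ((f (x i) + f (ξ i) + f (x i + x (i + 1) - ξ i) + f (x (i + 1)))
             * (x (i + 1) - x i))
           - (1/4) * ((x (i + 1) - x i) * (ξ i - (x i + x (i + 1)) / 2)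
               * (f' (ξ i) - f' (x i + x (i + 1) - ξ i))))|
      ≤ (1/3)*M*(((x i + 3 * x (i + 1)) / 4 - ξ i) * (x i - ξ i)^2
          + ((x i + x (i + 1)) / 2 - ξ i)^3) := by
    intro i hi
    rw [Finset.mem_range] at hi
    have h := cq_single (x i) (x (i+1)) (ξ i) M (hstep i hi) hM0 (hξ i hi).1 (hξ i hi).2
      f f' f''
      (fun t ht => hf' t (hsub i hi ht))
      (fun t ht => hf'' t (hsub i hi ht))
      (hint.mono_set (huv i hi))
      (by filter_upwards [hM] with t h ht using h (hsub i hi ht))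
    refine le_trans (le_of_eq ?_) h
    congr 1
    ring
  calc |(∫ t in a..b, f t)
      - ((1/4) * ∑ i ∈ Finset.range n,
           (f (x i) + f (ξ i) + f (x i + x (i + 1) - ξ i) + f (x (i + 1)))
             * (x (i + 1) - x i)
         - (1/4) * ∑ i ∈ Finset.range n,
             (x (i + 1) - x i) * (ξ i - (x i + x (i + 1)) / 2)
               * (f' (ξ i) - f' (x i + x (i + 1) - ξ i)))|
      = |∑ i ∈ Finset.range n,
          ((∫ t in (x i)..(x (i+1)), f t)
            - ((1/4) * ((f (x i) + f (ξ i) + f (x i + x (i + 1) - ξ i) + f (x (i + 1)))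
                 * (x (i + 1) - x i))
               - (1/4) * ((x (i + 1) - x i) * (ξ i - (x i + x (i + 1)) / 2)
                   * (f' (ξ i) - f' (x i + x (i + 1) - ξ i)))))| := by
        rw [← hsum, Finset.mul_sum, Finset.mul_sum, ← Finset.sum_sub_distrib,
          ← Finset.sum_sub_distrib]
    _ ≤ ∑ i ∈ Finset.range n,
          |(∫ t in (x i)..(x (i+1)), f t)
            - ((1/4) * ((f (x i) + f (ξ i) + f (x i + x (i + 1) - ξ i) + f (x (i + 1)))
                 * (x (i + 1) - x i))
               - (1/4) * ((x (i + 1) - x i) * (ξ i - (x i + x (i + 1)) / 2)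
                   * (f' (ξ i) - f' (x i + x (i + 1) - ξ i))))| :=
        Finset.abs_sum_le_sum_abs _ _
    _ ≤ ∑ i ∈ Finset.range n, (1/3)*M*(((x i + 3 * x (i + 1)) / 4 - ξ i) * (x i - ξ i)^2
          + ((x i + x (i + 1)) / 2 - ξ i)^3) := Finset.sum_le_sum main
    _ = (1/3) * M * ∑ i ∈ Finset.range n,
        (((x i + 3 * x (i + 1)) / 4 - ξ i) * (x i - ξ i)^2
          + ((x i + x (i + 1)) / 2 - ξ i)^3) := by rw [← Finset.mul_sum]
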